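/- arXiv:1904.01913 — 2 statements merged into one kernel-verified Lean document; each statement's English description precedes it below -/
import Mathlib

section
/- Let P = (E, ρ) be a (q,m)-polymatroid. Define ρ* : Σ(E) → ℕ by ρ*(X) = ρ(X^⊥) + m·dim X − ρ(E) for X ∈ Σ(E). Then (E, ρ*) is also a (q,m)-polymatroid, i.e. ρ* satisfies axioms (R1), (R2) and (R3). -/
set_option linter.unusedSectionVars false

open Module Matrix

variable {F : Type*} [Field F] [Fintype F] {n : ℕ}

/-- The orthogonal complement of a subspace of `𝔽_q^n` with respect to the standard dot product. -/
def perp (X : Submodule F (Fin n → F)) : Submodule F (Fin n → F) where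
  carrier := {x | ∀ y ∈ X, dotProduct x y = 0}
  add_mem' := fun {a b} ha hb y hy => by
    rw [Set.mem_setOf_eq] at *
    rw [add_dotProduct, ha y hy, hb y hy, add_zero]
  zero_mem' := fun y hy => zero_dotProduct y
  smul_mem' := fun c a ha y hy => by
    rw [Set.mem_setOf_eq] at *
    rw [smul_dotProduct, ha y hy, smul_zero]

/-- The dual rank function `ρ*(X) = ρ(X^⊥) + m·dim X − ρ(E)`. -/
noncomputable def dualRho (m : ℕ) (rho : Submodule F (Fin n → F) → ℤ) (X : Submodule F (Fin n → F)) : ℤ :=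
  rho (perp X) + (m : ℤ) * (finrank F X : ℤ) - rho ⊤

/-- The nullity function `ν(X) = m·dim X − ρ(X)`. -/
noncomputable def nullity (m : ℕ) (rho : Submodule F (Fin n → F) → ℤ) (X : Submodule F (Fin n → F)) : ℤ :=
  (m : ℤ) * (finrank F X : ℤ) - rho X

/-- The conullity function `ν*(X) = ρ(E) − ρ(X^⊥)`. -/
def coNull (rho : Submodule F (Fin n → F) → ℤ) (X : Submodule F (Fin n → F)) : ℤ :=
  rho ⊤ - rho (perp X)

/-- The `r`-th generalized weight `d_r = min{dim X : ν*(X) ≥ r}`. -/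
noncomputable def genW (rho : Submodule F (Fin n → F) → ℤ) (r : ℤ) : ℕ :=
  sInf {d : ℕ | ∃ X : Submodule F (Fin n → F), finrank F X = d ∧ r ≤ coNull rho X}

/-- `h(x) = max{ν(X) : dim X = x}`. -/
noncomputable def hFun (m : ℕ) (rho : Submodule F (Fin n → F) → ℤ) (x : ℕ) : ℤ :=
  sSup {v : ℤ | ∃ X : Submodule F (Fin n → F), finrank F X = x ∧ v = nullity m rho X}

/-- `h*(x) = max{ν*(X) : dim X = x}`. -/
noncomputable def hStar (rho : Submodule F (Fin n → F) → ℤ) (x : ℕ) : ℤ :=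
  sSup {v : ℤ | ∃ X : Submodule F (Fin n → F), finrank F X = x ∧ v = coNull rho X}

/-- A `(q,m)`-polymatroid on `E = 𝔽_q^n`. -/
structure QMPolymatroid (F : Type*) [Field F] [Fintype F] (n m : ℕ) where
  rho : Submodule F (Fin n → F) → ℤ
  rho_nonneg : ∀ X, 0 ≤ rho X
  rho_le : ∀ X, rho X ≤ (m : ℤ) * (finrank F X : ℤ)
  rho_mono : ∀ ⦃X Y⦄, X ≤ Y → rho X ≤ rho Y
  rho_submodular : ∀ X Y, rho (X ⊔ Y) + rho (X ⊓ Y) ≤ rho X + rho Y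

/-- A `(q,m)`-demi-polymatroid on `E = 𝔽_q^n`. -/
structure QMDemiPolymatroid (F : Type*) [Field F] [Fintype F] (n m : ℕ) where
  rho : Submodule F (Fin n → F) → ℤ
  rho_nonneg : ∀ X, 0 ≤ rho X
  rho_le : ∀ X, rho X ≤ (m : ℤ) * (finrank F X : ℤ)
  rho_mono : ∀ ⦃X Y⦄, X ≤ Y → rho X ≤ rho Y
  dual_nonneg : ∀ X, 0 ≤ dualRho m rho X
  dual_le : ∀ X, dualRho m rho X ≤ (m : ℤ) * (finrank F X : ℤ)
  dual_mono : ∀ ⦃X Y⦄, X ≤ Y → dualRho m rho X ≤ dualRho m rho Y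

section Codes

variable {m : ℕ}

/-- The row space of a matrix. -/
def rowSpace (A : Matrix (Fin m) (Fin n) F) : Submodule F (Fin n → F) :=
  Submodule.span F (Set.range A)

theorem rowSpace_le_iff (A : Matrix (Fin m) (Fin n) F) (X : Submodule F (Fin n → F)) :
    rowSpace A ≤ X ↔ ∀ i, A i ∈ X := by
  rw [rowSpace, Submodule.span_le]; exact Set.range_subset_iff

/-- Matrices whose row space is contained in `X`. -/
def supportedOn (m : ℕ) (X : Submodule F (Fin n → F)) :
    Submodule F (Matrix (Fin m) (Fin n) F) where
  carrier := {A | rowSpace A ≤ X}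
  add_mem' := fun {A B} hA hB => by
    rw [Set.mem_setOf_eq, rowSpace_le_iff] at *
    exact fun i => X.add_mem (hA i) (hB i)
  zero_mem' := by
    rw [Set.mem_setOf_eq, rowSpace_le_iff]
    exact fun i => X.zero_mem
  smul_mem' := fun c A hA => by
    rw [Set.mem_setOf_eq, rowSpace_le_iff] at *
    exact fun i => X.smul_mem c (hA i)

/-- `C(X)`: the subspace of a Delsarte code `C` of matrices whose row space lies in `X`. -/
def subcode (C : Submodule F (Matrix (Fin m) (Fin n) F)) (X : Submodule F (Fin n → F)) :
    Submodule F (Matrix (Fin m) (Fin n) F) :=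
  C ⊓ supportedOn m X

/-- The rank function `ρ_C(X) = dim C − dim C(X^⊥)` of a Delsarte code. -/
noncomputable def rhoC (C : Submodule F (Matrix (Fin m) (Fin n) F))
    (X : Submodule F (Fin n → F)) : ℤ :=
  (finrank F C : ℤ) - (finrank F (subcode C (perp X)) : ℤ)

/-- The generalized weight `d_r(C) = min{dim X : dim C(X) ≥ r}` of a Delsarte code. -/
noncomputable def codeWeight (C : Submodule F (Matrix (Fin m) (Fin n) F)) (r : ℤ) : ℕ :=
  sInf {d : ℕ | ∃ X : Submodule F (Fin n → F),
    finrank F X = d ∧ r ≤ (finrank F (subcode C X) : ℤ)}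

/-- The trace dual of a Delsarte code. -/
def traceDual (C : Submodule F (Matrix (Fin m) (Fin n) F)) :
    Submodule F (Matrix (Fin m) (Fin n) F) where
  carrier := {N | ∀ M ∈ C, Matrix.trace (M * Nᵀ) = 0}
  add_mem' := fun {N₁ N₂} h1 h2 M hM => by
    rw [Matrix.transpose_add, Matrix.mul_add, Matrix.trace_add, h1 M hM, h2 M hM, add_zero]
  zero_mem' := fun M hM => by simp
  smul_mem' := fun c N hN M hM => by
    rw [Matrix.transpose_smul, Matrix.mul_smul, Matrix.trace_smul, hN M hM, smul_zero]

/-- The transposed code `Cᵀ = {Mᵗ : M ∈ C}` of a code of square matrices. -/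
def transposeCode (C : Submodule F (Matrix (Fin n) (Fin n) F)) :
    Submodule F (Matrix (Fin n) (Fin n) F) where
  carrier := {A | Aᵀ ∈ C}
  add_mem' := fun {A B} hA hB => by
    rw [Set.mem_setOf_eq, Matrix.transpose_add]; exact C.add_mem hA hB
  zero_mem' := by
    rw [Set.mem_setOf_eq, Matrix.transpose_zero]; exact C.zero_mem
  smul_mem' := fun c A hA => by
    rw [Set.mem_setOf_eq, Matrix.transpose_smul]; exact C.smul_mem c hA

/-- The maximum rank of a matrix in a subspace of matrices. -/
noncomputable def maxrank (A : Submodule F (Matrix (Fin m) (Fin n) F)) : ℕ :=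
  sSup {r : ℕ | ∃ M ∈ A, M.rank = r}

/-- An optimal anticode: a subspace `𝒜` of `𝕄` with `dim 𝒜 = m · maxrank 𝒜`. -/
def IsOptimalAnticode (A : Submodule F (Matrix (Fin m) (Fin n) F)) : Prop :=
  finrank F A = m * maxrank A

/-- Ravagnani's generalized weight `a_r(C)`. -/
noncomputable def aWeight (C : Submodule F (Matrix (Fin m) (Fin n) F)) (r : ℤ) : ℕ :=
  (sInf {d : ℕ | ∃ A : Submodule F (Matrix (Fin m) (Fin n) F),
    IsOptimalAnticode A ∧ finrank F A = d ∧ r ≤ (finrank F (A ⊓ C : Submodule F _) : ℤ)}) / m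

end Codes

noncomputable def dotB : LinearMap.BilinForm F (Fin n → F) := Matrix.toBilin' (1 : Matrix (Fin n) (Fin n) F)

lemma dotB_apply (x y : Fin n → F) : dotB x y = dotProduct x y := by
  rw [dotB, Matrix.toBilin'_apply', Matrix.one_mulVec]

lemma dotB_nondeg : (dotB (F := F) (n := n)).Nondegenerate := by
  rw [dotB, LinearMap.BilinForm.nondegenerate_toBilin'_iff_det_ne_zero, Matrix.det_one]
  exact one_ne_zero

lemma dotB_refl : (dotB (F := F) (n := n)).IsRefl := by
  intro x y h
  rwa [dotB_apply, dotProduct_comm, ← dotB_apply]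

lemma perp_eq_orthogonal (X : Submodule F (Fin n → F)) : perp X = dotB.orthogonal X := by
  ext x
  simp only [perp, Submodule.mem_mk, AddSubmonoid.mem_mk, AddSubsemigroup.mem_mk,
    Set.mem_setOf_eq, LinearMap.BilinForm.mem_orthogonal_iff]
  constructor
  · intro h y hy
    rw [dotB_apply, dotProduct_comm]
    exact h y hy
  · intro h y hy
    have := h y hy
    rwa [dotB_apply, dotProduct_comm] at this

lemma finrank_perp (X : Submodule F (Fin n → F)) :
    finrank F (perp X) = n - finrank F X := by
  rw [perp_eq_orthogonal, LinearMap.BilinForm.finrank_orthogonal dotB_nondeg]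
  simp

lemma perp_perp (X : Submodule F (Fin n → F)) : perp (perp X) = X := by
  rw [perp_eq_orthogonal, perp_eq_orthogonal,
    LinearMap.BilinForm.orthogonal_orthogonal dotB_nondeg dotB_refl]

lemma perp_antitone {X Y : Submodule F (Fin n → F)} (h : X ≤ Y) : perp Y ≤ perp X :=
  fun x hx y hy => hx y (h hy)

lemma perp_sup (X Y : Submodule F (Fin n → F)) : perp (X ⊔ Y) = perp X ⊓ perp Y := by
  apply le_antisymm
  · exact le_inf (perp_antitone le_sup_left) (perp_antitone le_sup_right)
  · intro x hx y hy
    rcases Submodule.mem_sup.mp hy with ⟨a, ha, b, hb, rfl⟩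
    rw [dotProduct_add, hx.1 a ha, hx.2 b hb, add_zero]

lemma perp_inf (X Y : Submodule F (Fin n → F)) : perp (X ⊓ Y) = perp X ⊔ perp Y := by
  conv_lhs => rw [← perp_perp X, ← perp_perp Y, ← perp_sup]
  rw [perp_perp]

lemma perp_top : perp (⊤ : Submodule F (Fin n → F)) = ⊥ := by
  have h := finrank_perp (⊤ : Submodule F (Fin n → F))
  simp only [finrank_top, Module.finrank_fin_fun, Nat.sub_self] at h
  exact Submodule.finrank_eq_zero.mp h


lemma rho_grow {m : ℕ} (P : QMPolymatroid F n m) {A B : Submodule F (Fin n → F)} (h : A ≤ B) :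
    P.rho B ≤ P.rho A + (m : ℤ) * ((finrank F B : ℤ) - (finrank F A : ℤ)) := by
  obtain ⟨q, hq⟩ := Submodule.exists_isCompl (A.comap B.subtype)
  set Z := q.map B.subtype with hZ
  have hmapA : (A.comap B.subtype).map B.subtype = A := by
    rw [Submodule.map_comap_subtype, inf_eq_right.mpr h]
  have hsup : A ⊔ Z = B := by
    rw [← hmapA, hZ, ← Submodule.map_sup, codisjoint_iff.mp hq.codisjoint,
      Submodule.map_subtype_top]
  have hinf : A ⊓ Z = ⊥ := by
    rw [← hmapA, hZ, ← Submodule.map_inf _ (Submodule.injective_subtype B),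
      disjoint_iff.mp hq.disjoint, Submodule.map_bot]
  have hdim : finrank F A + finrank F Z = finrank F B := by
    have h1 := Submodule.finrank_add_eq_of_isCompl hq
    rw [hZ, Submodule.finrank_map_subtype_eq, ← hmapA, Submodule.finrank_map_subtype_eq]
    exact h1
  have h2 : P.rho B ≤ P.rho A + P.rho Z := by
    have := P.rho_submodular A Z
    have h0 := P.rho_nonneg (A ⊓ Z)
    rw [hsup] at this
    linarith
  have h3 := P.rho_le Z
  have : (finrank F Z : ℤ) = (finrank F B : ℤ) - (finrank F A : ℤ) := by omega
  rw [this] at h3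
  linarith


/-- The dual rank function `ρ*` of a `(q,m)`-polymatroid satisfies (R1), (R2), (R3),
i.e. `(E, ρ*)` is again a `(q,m)`-polymatroid. -/
theorem dual_of_polymatroid_is_polymatroid {F : Type*} [Field F] [Fintype F] {n m : ℕ}
    (P : QMPolymatroid F n m) :
    (∀ X : Submodule F (Fin n → F), 0 ≤ dualRho m P.rho X) ∧
    (∀ X : Submodule F (Fin n → F), dualRho m P.rho X ≤ (m : ℤ) * (finrank F X : ℤ)) ∧
    (∀ X Y : Submodule F (Fin n → F), X ≤ Y → dualRho m P.rho X ≤ dualRho m P.rho Y) ∧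
    (∀ X Y : Submodule F (Fin n → F),
      dualRho m P.rho (X ⊔ Y) + dualRho m P.rho (X ⊓ Y)
        ≤ dualRho m P.rho X + dualRho m P.rho Y) := by
  have hn : ∀ X : Submodule F (Fin n → F), finrank F X ≤ n := fun X => by
    simpa using Submodule.finrank_le X
  have htop : finrank F (⊤ : Submodule F (Fin n → F)) = n := by simp
  refine ⟨?_, ?_, ?_, ?_⟩
  · intro X
    have h1 := rho_grow P (le_top (a := perp X))
    have h2 := finrank_perp X
    have h3 := hn X
    have : ((finrank F (⊤ : Submodule F (Fin n → F)) : ℤ) - (finrank F (perp X) : ℤ))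
        = (finrank F X : ℤ) := by omega
    rw [this] at h1
    unfold dualRho
    linarith
  · intro X
    have := P.rho_mono (le_top (a := perp X))
    unfold dualRho
    linarith
  · intro X Y hXY
    have h1 := rho_grow P (perp_antitone hXY)
    have h2 := finrank_perp X
    have h3 := finrank_perp Y
    have h4 := hn Y
    have h5 := Submodule.finrank_mono hXY
    have : ((finrank F (perp X) : ℤ) - (finrank F (perp Y) : ℤ))
        = (finrank F Y : ℤ) - (finrank F X : ℤ) := by
      omega
    rw [this] at h1
    unfold dualRho
    linarith
  · intro X Y
    have h1 := P.rho_submodular (perp X) (perp Y)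
    have h2 : perp (X ⊔ Y) = perp X ⊓ perp Y := perp_sup X Y
    have h3 : perp (X ⊓ Y) = perp X ⊔ perp Y := perp_inf X Y
    have h4 := Submodule.finrank_sup_add_finrank_inf_eq X Y
    unfold dualRho
    rw [h2, h3]
    have h4' : (finrank F (X ⊔ Y : Submodule F (Fin n → F)) : ℤ)
        + (finrank F (X ⊓ Y : Submodule F (Fin n → F)) : ℤ)
        = (finrank F X : ℤ) + (finrank F Y : ℤ) := by exact_mod_cast h4
    have h5 : (m:ℤ) * (finrank F (X ⊔ Y : Submodule F (Fin n → F)) : ℤ)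
        + (m:ℤ) * (finrank F (X ⊓ Y : Submodule F (Fin n → F)) : ℤ)
        = (m:ℤ) * (finrank F X : ℤ) + (m:ℤ) * (finrank F Y : ℤ) := by
      rw [← mul_add, ← mul_add, h4']
    linarith
end

section
/- Let P = (E, ρ) be a (q,m)-polymatroid of rank K = ρ(E), and let s be an integer with 0 ≤ s < m. Define W_s(P*) = {d_r(P*) : 1 ≤ r ≤ mn − K, r ≡ s (mod m)} and W̄_t(P) = {n + 1 − d_r(P) : 1 ≤ r ≤ K, r ≡ t (mod m)}. Then W_s(P*) = {1, 2, …, n} \ W̄_{s+^m K}(P), where s +^m K denotes the unique integer in {0, 1, …, m−1} congruent to s + K modulo m. -/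
set_option linter.unusedSectionVars false

open Module Matrix

variable {F : Type*} [Field F] [Fintype F] {n : ℕ}

/-! ### Auxiliary development for Wei duality -/

namespace WeiAux

open Module Matrix Submodule

/-! #### Pure integer combinatorics -/

theorem shiftCong (m s K x r : ℤ) :
    (r ≡ s [ZMOD m]) ↔ (r - m * x + K ≡ s + K [ZMOD m]) := by
  rw [Int.modEq_iff_dvd, Int.modEq_iff_dvd]
  constructor
  · rintro ⟨t, ht⟩
    exact ⟨t + x, by linarith [ht]⟩
  · rintro ⟨t, ht⟩
    exact ⟨t - x, by linarith [ht]⟩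

theorem core (m A B c : ℤ) (hm : 1 ≤ m) (h1 : A ≤ B) (h2 : B ≤ A + m) :
    (∃ u : ℤ, u ≡ c [ZMOD m] ∧ B - m < u ∧ u ≤ A) ↔
      ¬ ∃ r : ℤ, r ≡ c [ZMOD m] ∧ A < r ∧ r ≤ B := by
  constructor
  · rintro ⟨u, hu, hu1, hu2⟩ ⟨r, hr, hr1, hr2⟩
    have hdvd : m ∣ r - u := (hu.trans hr.symm).dvd
    have hpos : 0 < r - u := by omega
    have := Int.le_of_dvd hpos hdvd
    omega
  · intro hno
    set w : ℤ := B - (B - c) % m with hw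
    have hmod1 : 0 ≤ (B - c) % m := Int.emod_nonneg _ (by omega)
    have hmod2 : (B - c) % m < m := Int.emod_lt_of_pos _ (by omega)
    have hwc : w ≡ c [ZMOD m] := by
      have e1 : (B - c) % m ≡ B - c [ZMOD m] := Int.emod_emod_of_dvd _ dvd_rfl
      have : w ≡ B - (B - c) [ZMOD m] := (Int.ModEq.refl B).sub e1
      simpa [sub_sub_cancel] using this
    refine ⟨w, hwc, by omega, ?_⟩
    by_contra hA
    push_neg at hA
    exact hno ⟨w, hwc, hA, by omega⟩

variable {F : Type*} [Field F] [Fintype F] {n : ℕ}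

/-! #### Dimension and existence lemmas -/

theorem finrank_topE : finrank F (⊤ : Submodule F (Fin n → F)) = n := by
  rw [finrank_top, Module.finrank_fin_fun]

theorem finrank_le' (X : Submodule F (Fin n → F)) : finrank F X ≤ n := by
  have := X.finrank_le
  rwa [Module.finrank_fin_fun] at this

theorem finrank_sup_span (X : Submodule F (Fin n → F)) {v : Fin n → F} (hv : v ∉ X) :
    finrank F (X ⊔ Submodule.span F {v} : Submodule F (Fin n → F)) = finrank F X + 1 := by
  have hv0 : v ≠ 0 := fun h => hv (h ▸ X.zero_mem)
  have hinf : X ⊓ Submodule.span F {v} = ⊥ := by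
    rw [eq_bot_iff]
    intro z hz
    obtain ⟨hz1, hz2⟩ := Submodule.mem_inf.mp hz
    rw [Submodule.mem_span_singleton] at hz2
    obtain ⟨c, rfl⟩ := hz2
    rcases eq_or_ne c 0 with rfl | hc
    · simp
    · exfalso
      apply hv
      have := X.smul_mem c⁻¹ hz1
      rwa [smul_smul, inv_mul_cancel₀ hc, one_smul] at this
  have h := Submodule.finrank_sup_add_finrank_inf_eq X (Submodule.span F {v})
  rw [hinf, finrank_bot, finrank_span_singleton hv0] at h
  omega

theorem exists_le_finrank (X : Submodule F (Fin n → F)) :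
    ∀ y : ℕ, finrank F X ≤ y → y ≤ n → ∃ Y, X ≤ Y ∧ finrank F Y = y := by
  intro y
  induction y with
  | zero =>
    intro h1 _
    exact ⟨X, le_rfl, by omega⟩
  | succ y ih =>
    intro h1 h2
    rcases eq_or_lt_of_le h1 with he | hlt
    · exact ⟨X, le_rfl, he⟩
    · obtain ⟨Y, hXY, hY⟩ := ih (by omega) (by omega)
      have hYne : Y ≠ ⊤ := by
        intro he
        rw [he, finrank_topE] at hY
        omega
      have : ∃ v, v ∉ Y := by
        by_contra h
        push_neg at h
        exact hYne (Submodule.eq_top_iff'.mpr h)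
      obtain ⟨v, hv⟩ := this
      exact ⟨Y ⊔ Submodule.span F {v}, le_trans hXY le_sup_left,
        by rw [finrank_sup_span Y hv, hY]⟩

theorem exists_finrank_eq (x : ℕ) (hx : x ≤ n) :
    ∃ X : Submodule F (Fin n → F), finrank F X = x :=
  (exists_le_finrank ⊥ x (by simp) hx).imp (fun _ h => h.2)

/-! #### The perp operator -/

/-- The dot product as a linear map into the dual. -/
def dotL : (Fin n → F) →ₗ[F] Module.Dual F (Fin n → F) :=
  LinearMap.mk₂ F (fun x y => dotProduct x y)
    (fun a b c => add_dotProduct a b c)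
    (fun c a b => by simp [smul_dotProduct, smul_eq_mul])
    (fun a b c => dotProduct_add a b c)
    (fun c a b => by simp [dotProduct_smul, smul_eq_mul])

@[simp] theorem dotL_apply (x y : Fin n → F) : dotL x y = dotProduct x y := rfl

theorem dotL_inj : Function.Injective (dotL (F := F) (n := n)) := by
  rw [← LinearMap.ker_eq_bot, eq_bot_iff]
  intro x hx
  rw [LinearMap.mem_ker] at hx
  rw [Submodule.mem_bot]
  funext i
  have := congrFun (congrArg DFunLike.coe hx) (Pi.single i 1)
  simpa [dotProduct_single] using this

theorem dotL_surj : Function.Surjective (dotL (F := F) (n := n)) := by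
  rw [← LinearMap.range_eq_top]
  apply Submodule.eq_top_of_finrank_eq
  have h1 := LinearMap.finrank_range_add_finrank_ker (dotL (F := F) (n := n))
  rw [LinearMap.ker_eq_bot.mpr dotL_inj, finrank_bot] at h1
  rw [Subspace.dual_finrank_eq]
  omega

/-- The dot product as a linear equivalence onto the dual. -/
noncomputable def dotE : (Fin n → F) ≃ₗ[F] Module.Dual F (Fin n → F) :=
  LinearEquiv.ofBijective dotL ⟨dotL_inj, dotL_surj⟩

theorem mem_perp {X : Submodule F (Fin n → F)} {x : Fin n → F} :
    x ∈ perp X ↔ ∀ y ∈ X, dotProduct x y = 0 := Iff.rfl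

theorem perp_eq_map (X : Submodule F (Fin n → F)) :
    perp X = (X.dualAnnihilator).map
      ((dotE (F := F) (n := n)).symm : Module.Dual F (Fin n → F) →ₗ[F] (Fin n → F)) := by
  ext x
  rw [Submodule.mem_map_equiv, LinearEquiv.symm_symm, Submodule.mem_dualAnnihilator, mem_perp]
  constructor
  · intro h w hw
    exact h w hw
  · intro h w hw
    exact h w hw

theorem finrank_add_perp (X : Submodule F (Fin n → F)) :
    finrank F X + finrank F (perp X) = n := by
  have h0 := LinearEquiv.finrank_map_eq ((dotE (F := F) (n := n)).symm) (X.dualAnnihilator)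
  rw [perp_eq_map, h0]
  have he := Subspace.quotEquivAnnihilator (K := F) (V := Fin n → F) X
  have h2 : finrank F ((Fin n → F) ⧸ X) = finrank F X.dualAnnihilator :=
    LinearEquiv.finrank_eq he
  have h1 := Submodule.finrank_quotient_add_finrank X
  rw [Module.finrank_fin_fun] at h1
  omega

theorem perp_anti {X Y : Submodule F (Fin n → F)} (h : X ≤ Y) : perp Y ≤ perp X := by
  intro x hx
  rw [mem_perp] at hx ⊢
  exact fun y hy => hx y (h hy)

theorem le_perp_perp (X : Submodule F (Fin n → F)) : X ≤ perp (perp X) := by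
  intro y hy
  rw [mem_perp]
  intro z hz
  rw [mem_perp] at hz
  rw [dotProduct_comm]
  exact hz y hy

theorem perp_perp (X : Submodule F (Fin n → F)) : perp (perp X) = X := by
  have h1 := finrank_add_perp X
  have h2 := finrank_add_perp (perp X)
  exact (Submodule.eq_of_le_of_finrank_eq (le_perp_perp X) (by omega)).symm

theorem perp_bot : perp (⊥ : Submodule F (Fin n → F)) = ⊤ := by
  rw [Submodule.eq_top_iff']
  intro x
  rw [mem_perp]
  intro y hy
  rw [Submodule.mem_bot] at hy
  simp [hy]

theorem perp_top : perp (⊤ : Submodule F (Fin n → F)) = ⊥ := by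
  have h := finrank_add_perp (⊤ : Submodule F (Fin n → F))
  rw [finrank_topE] at h
  exact Submodule.finrank_eq_zero.mp (by omega)

/-! #### Polymatroid rank basics -/

variable {m : ℕ}

theorem rho_bot (P : QMPolymatroid F n m) : P.rho ⊥ = 0 := by
  have h1 := P.rho_nonneg ⊥
  have h2 := P.rho_le ⊥
  rw [finrank_bot] at h2
  omega

theorem rho_step (P : QMPolymatroid F n m) {X Y : Submodule F (Fin n → F)}
    (hle : X ≤ Y) (hd : finrank F Y ≤ finrank F X + 1) : P.rho Y ≤ P.rho X + m := by
  have hm : (0 : ℤ) ≤ (m : ℤ) := Int.natCast_nonneg m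
  by_cases h : finrank F Y = finrank F X + 1
  · have hne : X ≠ Y := fun he => by rw [he] at h; omega
    obtain ⟨v, hvY, hvX⟩ := SetLike.exists_of_lt (lt_of_le_of_ne hle hne)
    have hv0 : v ≠ 0 := fun h0 => hvX (h0 ▸ X.zero_mem)
    have hsub : X ⊔ Submodule.span F {v} ≤ Y :=
      sup_le hle (Submodule.span_le.mpr (by simpa using hvY))
    have hsup : X ⊔ Submodule.span F {v} = Y :=
      Submodule.eq_of_le_of_finrank_eq hsub (by rw [finrank_sup_span X hvX, h])
    have hsm := P.rho_submodular X (Submodule.span F {v})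
    have h1 : P.rho (Submodule.span F {v}) ≤ m := by
      have := P.rho_le (Submodule.span F {v})
      rwa [finrank_span_singleton hv0, Nat.cast_one, mul_one] at this
    have h2 := P.rho_nonneg (X ⊓ Submodule.span F {v})
    rw [hsup] at hsm
    omega
  · have hX : X = Y := Submodule.eq_of_le_of_finrank_eq hle
      (le_antisymm (Submodule.finrank_mono hle) (by omega))
    rw [hX]
    omega

/-! #### The max-nullity function -/

instance : Finite (Submodule F (Fin n → F)) :=
  Finite.of_injective (fun X => (X : Set (Fin n → F))) SetLike.coe_injective

/-- The set of values of `f` on subspaces of dimension `x`. -/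
def SS (f : Submodule F (Fin n → F) → ℤ) (x : ℕ) : Set ℤ :=
  {v | ∃ X : Submodule F (Fin n → F), finrank F X = x ∧ v = f X}

/-- `myh f x = max {f X : dim X = x}`. -/
noncomputable def myh (f : Submodule F (Fin n → F) → ℤ) (x : ℕ) : ℤ := sSup (SS f x)

theorem SS_finite (f : Submodule F (Fin n → F) → ℤ) (x : ℕ) : (SS f x).Finite := by
  apply Set.Finite.subset (Set.finite_range f)
  rintro v ⟨X, _, rfl⟩
  exact ⟨X, rfl⟩

theorem SS_nonempty (f : Submodule F (Fin n → F) → ℤ) {x : ℕ} (hx : x ≤ n) :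
    (SS f x).Nonempty := by
  obtain ⟨X, hX⟩ := exists_finrank_eq (F := F) x hx
  exact ⟨f X, X, hX, rfl⟩

theorem myh_mem (f : Submodule F (Fin n → F) → ℤ) {x : ℕ} (hx : x ≤ n) :
    myh f x ∈ SS f x :=
  Set.Nonempty.csSup_mem (SS_nonempty f hx) (SS_finite f x)

theorem le_myh (f : Submodule F (Fin n → F) → ℤ) {x : ℕ} (X : Submodule F (Fin n → F))
    (h : finrank F X = x) : f X ≤ myh f x :=
  le_csSup (SS_finite f x).bddAbove ⟨X, h, rfl⟩

section hLemmas

variable (f : Submodule F (Fin n → F) → ℤ)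
  (hf0 : f ⊥ = 0)
  (hmono : ∀ X Y : Submodule F (Fin n → F),
    X ≤ Y → finrank F Y ≤ finrank F X + 1 → f X ≤ f Y)
  (hstep : ∀ X Y : Submodule F (Fin n → F),
    X ≤ Y → finrank F Y ≤ finrank F X + 1 → f Y ≤ f X + m)

include hf0 in
theorem myh_zero : myh f 0 = 0 := by
  have hSS : SS f 0 = {0} := by
    ext v
    simp only [SS, Set.mem_setOf_eq, Set.mem_singleton_iff]
    constructor
    · rintro ⟨X, hX, rfl⟩
      rw [show X = ⊥ from Submodule.finrank_eq_zero.mp hX, hf0]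
    · rintro rfl
      exact ⟨⊥, finrank_bot F _, hf0.symm⟩
  rw [myh, hSS, csSup_singleton]

include hmono in
theorem myh_le_succ {x : ℕ} (hx : x + 1 ≤ n) : myh f x ≤ myh f (x + 1) := by
  apply csSup_le (SS_nonempty f (by omega))
  rintro v ⟨X, hX, rfl⟩
  obtain ⟨Y, hXY, hY⟩ := exists_le_finrank X (x + 1) (by omega) hx
  exact le_trans (hmono X Y hXY (by omega)) (le_myh f Y hY)

include hstep in
theorem myh_succ_le {x : ℕ} (hx : x + 1 ≤ n) : myh f (x + 1) ≤ myh f x + m := by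
  apply csSup_le (SS_nonempty f hx)
  rintro v ⟨Y, hY, rfl⟩
  have hpY := finrank_add_perp Y
  obtain ⟨W, hPW, hWrk⟩ := exists_le_finrank (perp Y) (finrank F (perp Y) + 1)
    (by omega) (by omega)
  have hXY : perp W ≤ Y := by
    rw [← perp_perp Y]
    exact perp_anti hPW
  have hpW := finrank_add_perp W
  have hfr : finrank F (perp W) = x := by omega
  have h1 := hstep (perp W) Y hXY (by omega)
  have h2 := le_myh f (perp W) hfr
  omega

include hmono in
theorem myh_mono {x y : ℕ} (hxy : x ≤ y) (hy : y ≤ n) : myh f x ≤ myh f y := by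
  induction y, hxy using Nat.le_induction with
  | base => exact le_rfl
  | succ y hy' ih =>
    exact le_trans (ih (by omega)) (myh_le_succ f hmono hy)

include hf0 hmono in
theorem myh_nonneg {x : ℕ} (hx : x ≤ n) : 0 ≤ myh f x := by
  rw [← myh_zero f hf0]
  exact myh_mono f hmono (Nat.zero_le x) hx

theorem myh_top : myh f n = f ⊤ := by
  have hSS : SS f n = {f ⊤} := by
    ext v
    simp only [SS, Set.mem_setOf_eq, Set.mem_singleton_iff]
    constructor
    · rintro ⟨X, hX, rfl⟩
      have hXtop : X = ⊤ := Submodule.eq_of_le_of_finrank_eq le_top (by rw [hX, finrank_topE])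
      rw [hXtop]
    · rintro rfl
      exact ⟨⊤, finrank_topE, rfl⟩
  rw [myh, hSS, csSup_singleton]

/-! #### Characterization of the generalized-weight function -/

/-- The set whose infimum is the generalized weight. -/
def TT (r : ℤ) : Set ℕ :=
  {d | ∃ X : Submodule F (Fin n → F), finrank F X = d ∧ r ≤ f X}

include hf0 hmono in
theorem char_forward {r : ℤ} (hr1 : 1 ≤ r) (hrn : r ≤ myh f n) :
    1 ≤ sInf (TT f r) ∧ sInf (TT f r) ≤ n ∧
      myh f (sInf (TT f r) - 1) < r ∧ r ≤ myh f (sInf (TT f r)) := by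
  have hne : (TT f r).Nonempty := by
    obtain ⟨X, hX, he⟩ := myh_mem f (le_refl n)
    exact ⟨n, X, hX, by omega⟩
  set x := sInf (TT f r) with hxdef
  obtain ⟨X, hX, hrX⟩ := Nat.sInf_mem hne
  have hxn : x ≤ n := by
    rw [hxdef, ← hX]
    exact finrank_le' X
  have hx1 : 1 ≤ x := by
    rcases Nat.eq_zero_or_pos x with h0 | h
    · exfalso
      have hXbot : X = ⊥ := Submodule.finrank_eq_zero.mp (by omega)
      rw [hXbot, hf0] at hrX
      omega
    · exact h
  have hup : r ≤ myh f x := le_trans hrX (le_myh f X hX)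
  refine ⟨hx1, hxn, ?_, hup⟩
  by_contra hle
  push_neg at hle
  obtain ⟨X', hX', he⟩ := myh_mem f (x := x - 1) (by omega)
  have hmem : (x - 1) ∈ TT f r := ⟨X', hX', by omega⟩
  have := Nat.sInf_le hmem
  omega

include hmono in
theorem char_eq {r : ℤ} {x : ℕ} (hx1 : 1 ≤ x) (hxn : x ≤ n)
    (hlow : myh f (x - 1) < r) (hhigh : r ≤ myh f x) : sInf (TT f r) = x := by
  have hmem : x ∈ TT f r := by
    obtain ⟨X, hX, he⟩ := myh_mem f hxn
    exact ⟨X, hX, by omega⟩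
  refine le_antisymm (Nat.sInf_le hmem) (le_csInf ⟨x, hmem⟩ ?_)
  rintro d ⟨X, hX, hrX⟩
  by_contra hd
  push_neg at hd
  have h1 : f X ≤ myh f (x - 1) :=
    le_trans (le_myh f X hX) (myh_mono f hmono (by omega) (by omega))
  omega

end hLemmas

end WeiAux

namespace WeiAux

open Module Matrix Submodule

variable {F : Type*} [Field F] [Fintype F] {n m : ℕ}

/-- The nullity function of `P`, which is the conullity function of `P*`. -/
noncomputable def f1 (P : QMPolymatroid F n m) : Submodule F (Fin n → F) → ℤ :=
  fun X => (m : ℤ) * (finrank F X : ℤ) - P.rho X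

/-- The conullity function of `P`. -/
def f2 (P : QMPolymatroid F n m) : Submodule F (Fin n → F) → ℤ := coNull P.rho

theorem f1_bot (P : QMPolymatroid F n m) : f1 P ⊥ = 0 := by
  unfold f1
  rw [finrank_bot, rho_bot P]
  simp

theorem f2_bot (P : QMPolymatroid F n m) : f2 P ⊥ = 0 := by
  show P.rho ⊤ - P.rho (perp ⊥) = 0
  rw [perp_bot]
  ring

theorem f1_mono (P : QMPolymatroid F n m) :
    ∀ X Y : Submodule F (Fin n → F), X ≤ Y → finrank F Y ≤ finrank F X + 1 →
      f1 P X ≤ f1 P Y := by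
  intro X Y hle hd
  have hstep := rho_step P hle hd
  have hmono := Submodule.finrank_mono hle
  by_cases h : finrank F Y = finrank F X + 1
  · unfold f1
    have hc : (finrank F Y : ℤ) = (finrank F X : ℤ) + 1 := by exact_mod_cast h
    rw [hc]
    have hexp : (m : ℤ) * ((finrank F X : ℤ) + 1) = (m : ℤ) * (finrank F X : ℤ) + m := by
      ring
    linarith
  · rw [Submodule.eq_of_le_of_finrank_eq hle (by omega)]

theorem f1_step (P : QMPolymatroid F n m) :
    ∀ X Y : Submodule F (Fin n → F), X ≤ Y → finrank F Y ≤ finrank F X + 1 →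
      f1 P Y ≤ f1 P X + m := by
  intro X Y hle hd
  unfold f1
  have h1 := P.rho_mono hle
  have hc : (finrank F Y : ℤ) ≤ (finrank F X : ℤ) + 1 := by exact_mod_cast hd
  have h2 : (m : ℤ) * (finrank F Y : ℤ) ≤ (m : ℤ) * ((finrank F X : ℤ) + 1) :=
    mul_le_mul_of_nonneg_left hc (by positivity)
  have hexp : (m : ℤ) * ((finrank F X : ℤ) + 1) = (m : ℤ) * (finrank F X : ℤ) + m := by ring
  linarith

theorem f2_mono (P : QMPolymatroid F n m) :
    ∀ X Y : Submodule F (Fin n → F), X ≤ Y → finrank F Y ≤ finrank F X + 1 →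
      f2 P X ≤ f2 P Y := by
  intro X Y hle _
  have := P.rho_mono (perp_anti hle)
  show P.rho ⊤ - P.rho (perp X) ≤ P.rho ⊤ - P.rho (perp Y)
  linarith

theorem f2_step (P : QMPolymatroid F n m) :
    ∀ X Y : Submodule F (Fin n → F), X ≤ Y → finrank F Y ≤ finrank F X + 1 →
      f2 P Y ≤ f2 P X + m := by
  intro X Y hle hd
  have hpX := finrank_add_perp X
  have hpY := finrank_add_perp Y
  have := rho_step P (perp_anti hle)
    (by omega : finrank F (perp X) ≤ finrank F (perp Y) + 1)
  show P.rho ⊤ - P.rho (perp Y) ≤ P.rho ⊤ - P.rho (perp X) + m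
  linarith

theorem coNull_dualRho (P : QMPolymatroid F n m) (X : Submodule F (Fin n → F)) :
    coNull (dualRho m P.rho) X = f1 P X := by
  unfold coNull dualRho f1
  rw [perp_top, perp_perp, rho_bot P, finrank_topE]
  have h := finrank_add_perp X
  have hc : (finrank F (perp X) : ℤ) = (n : ℤ) - (finrank F X : ℤ) := by
    have h2 : ((finrank F X + finrank F (perp X) : ℕ) : ℤ) = (n : ℤ) := by exact_mod_cast h
    push_cast at h2
    linarith
  rw [hc]
  ring

theorem genW_dual_eq (P : QMPolymatroid F n m) (r : ℤ) :
    genW (dualRho m P.rho) r = sInf (TT (f1 P) r) := by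
  unfold genW TT
  congr 1
  ext d
  simp only [Set.mem_setOf_eq]
  constructor
  · rintro ⟨X, h1, h2⟩
    exact ⟨X, h1, by rwa [coNull_dualRho P X] at h2⟩
  · rintro ⟨X, h1, h2⟩
    exact ⟨X, h1, by rwa [coNull_dualRho P X]⟩

theorem genW_eq2 (P : QMPolymatroid F n m) (r : ℤ) :
    genW P.rho r = sInf (TT (f2 P) r) := rfl

theorem myh_f1_top (P : QMPolymatroid F n m) :
    myh (f1 P) n = (m : ℤ) * (n : ℤ) - P.rho ⊤ := by
  rw [myh_top]
  unfold f1
  rw [finrank_topE]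

theorem myh_f2_top (P : QMPolymatroid F n m) : myh (f2 P) n = P.rho ⊤ := by
  rw [myh_top]
  show P.rho ⊤ - P.rho (perp ⊤) = P.rho ⊤
  rw [perp_top, rho_bot P]
  ring

theorem myh_dual (P : QMPolymatroid F n m) {x : ℕ} (hx : x ≤ n) :
    myh (f1 P) x = myh (f2 P) (n - x) + (m : ℤ) * (x : ℤ) - P.rho ⊤ := by
  apply le_antisymm
  · obtain ⟨X, hX, he⟩ := myh_mem (f1 P) hx
    have hp := finrank_add_perp X
    have h2 : f2 P (perp X) ≤ myh (f2 P) (n - x) := le_myh _ _ (by omega)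
    have h3 : f2 P (perp X) = P.rho ⊤ - P.rho X := by
      show P.rho ⊤ - P.rho (perp (perp X)) = _
      rw [perp_perp]
    have h4 : f1 P X = (m : ℤ) * (x : ℤ) - P.rho X := by
      unfold f1
      rw [hX]
    rw [he, h4]
    linarith
  · obtain ⟨Y, hY, he⟩ := myh_mem (f2 P) (x := n - x) (by omega)
    have hp := finrank_add_perp Y
    have h2 : f1 P (perp Y) ≤ myh (f1 P) x := le_myh _ _ (by omega)
    have h3 : f1 P (perp Y) = (m : ℤ) * (x : ℤ) - P.rho (perp Y) := by
      unfold f1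
      rw [show finrank F (perp Y) = x by omega]
    have h4 : f2 P Y = P.rho ⊤ - P.rho (perp Y) := rfl
    rw [he, h4]
    linarith

end WeiAux

/-- `W_s(P*) = {1, …, n} \ W̄_{s +^m K}(P)`. -/
theorem wei_duality_sets {F : Type*} [Field F] [Fintype F] {n m : ℕ}
    (P : QMPolymatroid F n m) (s : ℤ) (hs0 : 0 ≤ s) (hsm : s < (m : ℤ)) :
    {d : ℕ | ∃ r : ℤ, 1 ≤ r ∧ r ≤ (m : ℤ) * (n : ℤ) - P.rho ⊤ ∧
        r ≡ s [ZMOD (m : ℤ)] ∧ d = genW (dualRho m P.rho) r}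
      = Set.Icc 1 n \
        {d : ℕ | ∃ r : ℤ, 1 ≤ r ∧ r ≤ P.rho ⊤ ∧
          r ≡ (s + P.rho ⊤) % (m : ℤ) [ZMOD (m : ℤ)] ∧ d = n + 1 - genW P.rho r} := by
  
  classical
  have hm1 : (1 : ℤ) ≤ (m : ℤ) := by omega
  have hK0 : 0 ≤ P.rho ⊤ := P.rho_nonneg ⊤
  have hKn : P.rho ⊤ ≤ (m : ℤ) * (n : ℤ) := by
    have := P.rho_le ⊤
    rwa [WeiAux.finrank_topE] at this
  have ht1 := WeiAux.myh_f1_top P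
  have ht2 := WeiAux.myh_f2_top P
  have hf1_0 := WeiAux.f1_bot P
  have hf1_mono := WeiAux.f1_mono P
  have hf1_step := WeiAux.f1_step P
  have hf2_0 := WeiAux.f2_bot P
  have hf2_mono := WeiAux.f2_mono P
  have hf2_step := WeiAux.f2_step P
  ext x
  simp only [Set.mem_setOf_eq, Set.mem_diff, Set.mem_Icc]
  have L1 : (∃ r : ℤ, 1 ≤ r ∧ r ≤ (m : ℤ) * (n : ℤ) - P.rho ⊤ ∧ r ≡ s [ZMOD (m : ℤ)] ∧
        x = genW (dualRho m P.rho) r)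
      ↔ (1 ≤ x ∧ x ≤ n ∧ ∃ r : ℤ, r ≡ s [ZMOD (m : ℤ)] ∧
          WeiAux.myh (WeiAux.f1 P) (x - 1) < r ∧ r ≤ WeiAux.myh (WeiAux.f1 P) x) := by
    constructor
    · rintro ⟨r, hr1, hr2, hrs, he⟩
      rw [WeiAux.genW_dual_eq P r] at he
      obtain ⟨h1, h2, h3, h4⟩ := WeiAux.char_forward (WeiAux.f1 P) hf1_0 hf1_mono hr1
        (by rw [ht1]; exact hr2)
      subst he
      exact ⟨h1, h2, r, hrs, h3, h4⟩
    · rintro ⟨hx1, hxn, r, hrs, hlo, hhi⟩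
      have hr1 : 1 ≤ r := by
        have := WeiAux.myh_nonneg (WeiAux.f1 P) hf1_0 hf1_mono (x := x - 1) (by omega)
        linarith
      have hr2 : r ≤ (m : ℤ) * (n : ℤ) - P.rho ⊤ := by
        have := WeiAux.myh_mono (WeiAux.f1 P) hf1_mono hxn le_rfl
        rw [ht1] at this
        linarith
      refine ⟨r, hr1, hr2, hrs, ?_⟩
      rw [WeiAux.genW_dual_eq P r, WeiAux.char_eq (WeiAux.f1 P) hf1_mono hx1 hxn hlo hhi]
  have L2 : (∃ r : ℤ, 1 ≤ r ∧ r ≤ P.rho ⊤ ∧ r ≡ (s + P.rho ⊤) % (m : ℤ) [ZMOD (m : ℤ)] ∧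
        x = n + 1 - genW P.rho r)
      ↔ (1 ≤ x ∧ x ≤ n ∧ ∃ r : ℤ, r ≡ s + P.rho ⊤ [ZMOD (m : ℤ)] ∧
          WeiAux.myh (WeiAux.f2 P) (n - x) < r ∧ r ≤ WeiAux.myh (WeiAux.f2 P) (n - x + 1)) := by
    have hres : ∀ r : ℤ, (r ≡ (s + P.rho ⊤) % (m : ℤ) [ZMOD (m : ℤ)]) ↔
        (r ≡ s + P.rho ⊤ [ZMOD (m : ℤ)]) := by
      intro r
      unfold Int.ModEq
      rw [Int.emod_emod_of_dvd _ dvd_rfl]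
    constructor
    · rintro ⟨r, hr1, hr2, hrs, he⟩
      rw [WeiAux.genW_eq2 P r] at he
      obtain ⟨h1, h2, h3, h4⟩ := WeiAux.char_forward (WeiAux.f2 P) hf2_0 hf2_mono hr1
        (by rw [ht2]; exact hr2)
      have hx1 : 1 ≤ x := by omega
      have hxn : x ≤ n := by omega
      refine ⟨hx1, hxn, r, (hres r).mp hrs, ?_, ?_⟩
      · rw [show n - x = sInf (WeiAux.TT (WeiAux.f2 P) r) - 1 by omega]
        exact h3
      · rw [show n - x + 1 = sInf (WeiAux.TT (WeiAux.f2 P) r) by omega]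
        exact h4
    · rintro ⟨hx1, hxn, r, hrs, hlo, hhi⟩
      have hr1 : 1 ≤ r := by
        have := WeiAux.myh_nonneg (WeiAux.f2 P) hf2_0 hf2_mono (x := n - x) (by omega)
        linarith
      have hr2 : r ≤ P.rho ⊤ := by
        have := WeiAux.myh_mono (WeiAux.f2 P) hf2_mono
          (show n - x + 1 ≤ n by omega) le_rfl
        rw [ht2] at this
        linarith
      refine ⟨r, hr1, hr2, (hres r).mpr hrs, ?_⟩
      have hchar : sInf (WeiAux.TT (WeiAux.f2 P) r) = n + 1 - x :=
        WeiAux.char_eq (WeiAux.f2 P) hf2_mono (by omega) (by omega)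
          (by rw [show n + 1 - x - 1 = n - x by omega]; exact hlo)
          (by rw [show n + 1 - x = n - x + 1 by omega]; exact hhi)
      rw [WeiAux.genW_eq2 P r, hchar]
      omega
  by_cases hx : 1 ≤ x ∧ x ≤ n
  · obtain ⟨hx1, hxn⟩ := hx
    have hAB1 : WeiAux.myh (WeiAux.f2 P) (n - x) ≤ WeiAux.myh (WeiAux.f2 P) (n - x + 1) :=
      WeiAux.myh_mono (WeiAux.f2 P) hf2_mono (by omega) (by omega)
    have hAB2 : WeiAux.myh (WeiAux.f2 P) (n - x + 1) ≤ WeiAux.myh (WeiAux.f2 P) (n - x) + m :=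
      WeiAux.myh_succ_le (WeiAux.f2 P) hf2_step (by omega)
    have hM3x : WeiAux.myh (WeiAux.f1 P) x
        = WeiAux.myh (WeiAux.f2 P) (n - x) + (m : ℤ) * (x : ℤ) - P.rho ⊤ :=
      WeiAux.myh_dual P hxn
    have hM3x' : WeiAux.myh (WeiAux.f1 P) (x - 1)
        = WeiAux.myh (WeiAux.f2 P) (n - x + 1) + (m : ℤ) * ((x : ℤ) - 1) - P.rho ⊤ := by
      have h := WeiAux.myh_dual P (x := x - 1) (by omega)
      rw [show n - (x - 1) = n - x + 1 by omega] at h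
      rw [h, show ((x - 1 : ℕ) : ℤ) = (x : ℤ) - 1 by omega]
    have hexp : (m : ℤ) * ((x : ℤ) - 1) = (m : ℤ) * (x : ℤ) - m := by ring
    have key := WeiAux.core (m : ℤ) (WeiAux.myh (WeiAux.f2 P) (n - x))
      (WeiAux.myh (WeiAux.f2 P) (n - x + 1)) (s + P.rho ⊤) hm1 hAB1 hAB2
    rw [L1, L2]
    constructor
    · rintro ⟨_, _, r, hrs, hlo, hhi⟩
      refine ⟨⟨hx1, hxn⟩, ?_⟩
      rintro ⟨_, _, r', hrs', hlo', hhi'⟩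
      apply key.mp ?_ ⟨r', hrs', hlo', hhi'⟩
      refine ⟨r - (m : ℤ) * (x : ℤ) + P.rho ⊤,
        (WeiAux.shiftCong (m : ℤ) s (P.rho ⊤) (x : ℤ) r).mp hrs, ?_, ?_⟩
      · rw [hM3x', hexp] at hlo
        linarith
      · rw [hM3x] at hhi
        linarith
    · rintro ⟨_, hno⟩
      have hnoPsi : ¬ ∃ r : ℤ, r ≡ s + P.rho ⊤ [ZMOD (m : ℤ)] ∧
          WeiAux.myh (WeiAux.f2 P) (n - x) < r ∧
            r ≤ WeiAux.myh (WeiAux.f2 P) (n - x + 1) := by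
        rintro ⟨r, h1, h2, h3⟩
        exact hno ⟨hx1, hxn, r, h1, h2, h3⟩
      obtain ⟨u, hu, hu1, hu2⟩ := key.mpr hnoPsi
      refine ⟨hx1, hxn, u + (m : ℤ) * (x : ℤ) - P.rho ⊤, ?_, ?_, ?_⟩
      · apply (WeiAux.shiftCong (m : ℤ) s (P.rho ⊤) (x : ℤ)
          (u + (m : ℤ) * (x : ℤ) - P.rho ⊤)).mpr
        rw [show u + (m : ℤ) * (x : ℤ) - P.rho ⊤ - (m : ℤ) * (x : ℤ) + P.rho ⊤ = u by ring]
        exact hu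
      · rw [hM3x', hexp]
        linarith
      · rw [hM3x]
        linarith
  · constructor
    · intro h
      exact absurd ⟨(L1.mp h).1, (L1.mp h).2.1⟩ hx
    · rintro ⟨hxx, _⟩
      exact absurd hxx hx
end
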